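/- In EuclideanSpace ℝ (Fin 3), let (n, m, u) be an orthonormal family of vectors, C a point, d > 0, θ ∈ [0, π], α ∈ ℝ, and let D = C + (d·sin(π−θ)·cos(α+π/2))·n + (d·sin(π−θ)·sin(α+π/2))·m + (d·cos(π−θ))·u. Suppose further B = C − r·u for some r > 0. Then the angle between the vectors B − C and D − C equals θ. (Part of Claim A of the paper's Proposition: NeRF reconstruction realizes the prescribed bond angle ∠(B, C, D) exactly by construction.) -/

import Mathlib

open Real

/-- NeRF bond angle: the Euclidean angle between `B − C` and `D − C` equals the
prescribed bond angle `θ`, where `D` is the NeRF-placed point in the orthonormal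
local frame `(n, m, u)` and `B = C − r • u` lies behind `C` along `u`. -/
theorem nerf_bond_angle_exact
    (n m u : EuclideanSpace ℝ (Fin 3)) (hortho : Orthonormal ℝ ![n, m, u])
    (C B : EuclideanSpace ℝ (Fin 3)) (d θ α r : ℝ)
    (hd : 0 < d) (hθ : θ ∈ Set.Icc (0 : ℝ) π) (hr : 0 < r)
    (hB : B = C - r • u)
    (D : EuclideanSpace ℝ (Fin 3))
    (hD : D = C + (d * Real.sin (π - θ) * Real.cos (α + π / 2)) • n
            + (d * Real.sin (π - θ) * Real.sin (α + π / 2)) • m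
            + (d * Real.cos (π - θ)) • u) :
    InnerProductGeometry.angle (B - C) (D - C) = θ := by
  rw [orthonormal_iff_ite] at hortho
  have hnn : (inner ℝ n n : ℝ) = 1 := by simpa using hortho 0 0
  have hmm : (inner ℝ m m : ℝ) = 1 := by simpa using hortho 1 1
  have huu : (inner ℝ u u : ℝ) = 1 := by simpa using hortho 2 2
  have hun : (inner ℝ u n : ℝ) = 0 := by simpa using hortho 2 0
  have hum : (inner ℝ u m : ℝ) = 0 := by simpa using hortho 2 1
  have hnm : (inner ℝ n m : ℝ) = 0 := by simpa using hortho 0 1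
  have hmn : (inner ℝ m n : ℝ) = 0 := by simpa using hortho 1 0
  have hnu : (inner ℝ n u : ℝ) = 0 := by simpa using hortho 0 2
  have hmu : (inner ℝ m u : ℝ) = 0 := by simpa using hortho 1 2
  set a := d * Real.sin (π - θ) * Real.cos (α + π / 2) with ha
  set b := d * Real.sin (π - θ) * Real.sin (α + π / 2) with hb
  set c := d * Real.cos (π - θ) with hc
  have hBC : B - C = (-r) • u := by rw [hB]; module
  have hDC : D - C = a • n + b • m + c • u := by rw [hD]; module
  have hinner : (inner ℝ (B - C) (D - C) : ℝ) = -r * c := by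
    rw [hBC, hDC]
    simp [inner_add_right, inner_smul_left, inner_smul_right, hun, hum, huu, -inner_self_eq_norm_sq_to_K]
    ring
  have hnormB : ‖B - C‖ = r := by
    rw [hBC, norm_smul]
    have : ‖u‖ = 1 := by
      rw [← Real.sqrt_one, ← huu, real_inner_self_eq_norm_sq]
      simp [Real.sqrt_sq (norm_nonneg u)]
    simp [this, abs_of_pos hr]
  have hsq : (inner ℝ (D - C) (D - C) : ℝ) = a ^ 2 + b ^ 2 + c ^ 2 := by
    rw [hDC]
    simp [inner_add_right, inner_add_left, inner_smul_left, inner_smul_right,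
      hnn, hmm, huu, hun, hum, hnm, hmn, hnu, hmu, -inner_self_eq_norm_sq_to_K]
    ring
  have habc : a ^ 2 + b ^ 2 + c ^ 2 = d ^ 2 := by
    rw [ha, hb, hc]
    have h1 := Real.sin_sq_add_cos_sq (α + π / 2)
    have h2 := Real.sin_sq_add_cos_sq (π - θ)
    linear_combination (d ^ 2 * Real.sin (π - θ) ^ 2) * h1 + d ^ 2 * h2
  have hnormD : ‖D - C‖ = d := by
    have h : ‖D - C‖ ^ 2 = d ^ 2 := by
      rw [← real_inner_self_eq_norm_sq, hsq, habc]
    calc ‖D - C‖ = Real.sqrt (‖D - C‖ ^ 2) := by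
            rw [Real.sqrt_sq (norm_nonneg _)]
      _ = Real.sqrt (d ^ 2) := by rw [h]
      _ = d := Real.sqrt_sq hd.le
  have hcos : c = d * Real.cos (π - θ) := hc
  rw [InnerProductGeometry.angle, hinner, hnormB, hnormD]
  have : -r * c / (r * d) = Real.cos θ := by
    rw [hc, Real.cos_pi_sub]
    field_simp
  rw [this, Real.arccos_cos hθ.1 hθ.2]
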